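/- Let Ω ⊆ ℝ^d be open, let δ > 0, let x₀ ∈ ℝ^d with ∂Ω ∩ B(x₀,δ) ≠ ∅. Let n ∈ ℕ and let v₁,…,vₙ ∈ S^{d−1} all be good directions for Ω at x₀ at scale δ. Let λ₁,…,λₙ ∈ [0,1] with λ₁ + ⋯ + λₙ = 1. Then λ₁v₁ + ⋯ + λₙvₙ ≠ 0, and the unit vector w = (λ₁v₁ + ⋯ + λₙvₙ)/|λ₁v₁ + ⋯ + λₙvₙ| is a good direction for Ω at x₀ at scale δ. -/

import Mathlib

open Metric Set
open scoped RealInnerProductSpace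

/-- `v` is a good direction for `Ω` at `x₀` at scale `δ`: `v` is a unit vector and there is a
continuous function `g` on the hyperplane `Π(x₀,v) = {x | ⟪x - x₀, v⟫ = 0}` such that
`Ω ∩ B(x₀,δ)` is the open region above the graph of `g` and `∂Ω ∩ B(x₀,δ)` is the graph of `g`,
in the direction `v`.  Here `x - ⟪x - x₀, v⟫ • v` is the orthogonal projection of `x` onto
`Π(x₀,v)`. -/
def IsGoodDirection {d : ℕ} (Ω : Set (EuclideanSpace ℝ (Fin d)))
    (x₀ : EuclideanSpace ℝ (Fin d)) (δ : ℝ) (v : EuclideanSpace ℝ (Fin d)) : Prop :=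
  ‖v‖ = 1 ∧ ∃ g : EuclideanSpace ℝ (Fin d) → ℝ,
    ContinuousOn g {x | ⟪x - x₀, v⟫ = 0} ∧
    Ω ∩ ball x₀ δ = {x ∈ ball x₀ δ | g (x - ⟪x - x₀, v⟫ • v) < ⟪x - x₀, v⟫} ∧
    frontier Ω ∩ ball x₀ δ = {x ∈ ball x₀ δ | g (x - ⟪x - x₀, v⟫ • v) = ⟪x - x₀, v⟫}

private lemma inner_step {x x₀ v : EuclideanSpace ℝ (Fin d)} (t : ℝ) (hv : ‖v‖ = 1) :
    ⟪x + t • v - x₀, v⟫ = ⟪x - x₀, v⟫ + t := by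
  have h : x + t • v - x₀ = (x - x₀) + t • v := by abel
  rw [h, inner_add_left, real_inner_smul_left, real_inner_self_eq_norm_sq, hv]
  ring

private lemma closure_eq_union {Ω : Set (EuclideanSpace ℝ (Fin d))} (hΩ : IsOpen Ω) :
    closure Ω = Ω ∪ frontier Ω := by
  rw [hΩ.frontier_eq, union_diff_self, union_eq_self_of_subset_left subset_closure]

/-- Moving up from a point of `closure Ω` along a good direction stays in `closure Ω`,
and lands in `Ω` if we start in `Ω` or move a positive amount. -/
private lemma goodStep {Ω : Set (EuclideanSpace ℝ (Fin d))} (hΩ : IsOpen Ω)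
    {x₀ : EuclideanSpace ℝ (Fin d)} {δ : ℝ} {v : EuclideanSpace ℝ (Fin d)}
    (hv : IsGoodDirection Ω x₀ δ v) {z : EuclideanSpace ℝ (Fin d)}
    (hz : z ∈ closure Ω) (hzB : z ∈ ball x₀ δ) {t : ℝ} (ht : 0 ≤ t)
    (hzB' : z + t • v ∈ ball x₀ δ) :
    z + t • v ∈ closure Ω ∧ ((z ∈ Ω ∨ 0 < t) → z + t • v ∈ Ω) := by
  obtain ⟨hv1, g, hgc, hΩeq, hfr⟩ := hv
  set s : ℝ := ⟪z - x₀, v⟫ with hs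
  have hinner : ⟪z + t • v - x₀, v⟫ = s + t := inner_step t hv1
  have hproj : z + t • v - (s + t) • v = z - s • v := by rw [add_smul]; abel
  -- membership criteria
  have hmemΩ : ∀ y ∈ ball x₀ δ, (y ∈ Ω ↔ g (y - ⟪y - x₀, v⟫ • v) < ⟪y - x₀, v⟫) := by
    intro y hy
    constructor
    · intro h; have : y ∈ Ω ∩ ball x₀ δ := ⟨h, hy⟩
      rw [hΩeq] at this; exact this.2
    · intro h; have : y ∈ {x ∈ ball x₀ δ | g (x - ⟪x - x₀, v⟫ • v) < ⟪x - x₀, v⟫} := ⟨hy, h⟩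
      rw [← hΩeq] at this; exact this.1
  have hmemF : ∀ y ∈ ball x₀ δ, (y ∈ frontier Ω ↔ g (y - ⟪y - x₀, v⟫ • v) = ⟪y - x₀, v⟫) := by
    intro y hy
    constructor
    · intro h; have : y ∈ frontier Ω ∩ ball x₀ δ := ⟨h, hy⟩
      rw [hfr] at this; exact this.2
    · intro h; have : y ∈ {x ∈ ball x₀ δ | g (x - ⟪x - x₀, v⟫ • v) = ⟪x - x₀, v⟫} := ⟨hy, h⟩
      rw [← hfr] at this; exact this.1
  have hzc : g (z - s • v) ≤ s ∧ (z ∈ Ω → g (z - s • v) < s) := by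
    rw [closure_eq_union hΩ] at hz
    rcases hz with h | h
    · exact ⟨le_of_lt ((hmemΩ z hzB).1 h), fun _ => (hmemΩ z hzB).1 h⟩
    · refine ⟨le_of_eq ((hmemF z hzB).1 h), fun hzo => absurd hzo ?_⟩
      rw [hΩ.frontier_eq] at h; exact h.2
  constructor
  · rw [closure_eq_union hΩ]
    rcases lt_or_eq_of_le (le_trans hzc.1 (by linarith : s ≤ s + t)) with h | h
    · left
      have := (hmemΩ (z + t • v) hzB').2
      rw [hinner, hproj] at this
      exact this h
    · right
      have := (hmemF (z + t • v) hzB').2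
      rw [hinner, hproj] at this
      exact this h
  · rintro (h | h)
    · have hlt : g (z - s • v) < s + t := lt_of_lt_of_le (hzc.2 h) (by linarith)
      have := (hmemΩ (z + t • v) hzB').2
      rw [hinner, hproj] at this
      exact this hlt
    · have hlt : g (z - s • v) < s + t := lt_of_le_of_lt hzc.1 (by linarith)
      have := (hmemΩ (z + t • v) hzB').2
      rw [hinner, hproj] at this
      exact this hlt

/-- One "round" of moves along good directions. -/
private lemma roundN {Ω : Set (EuclideanSpace ℝ (Fin d))} (hΩ : IsOpen Ω)
    {x₀ : EuclideanSpace ℝ (Fin d)} {δ : ℝ} (m : ℕ) (W : ℕ → EuclideanSpace ℝ (Fin d))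
    (hW : ∀ i < m, ∃ t : ℝ, 0 ≤ t ∧ ∃ vv, IsGoodDirection Ω x₀ δ vv ∧ W i = t • vv)
    {z : EuclideanSpace ℝ (Fin d)} (hz : z ∈ closure Ω)
    (hB : ∀ j ≤ m, z + ∑ i ∈ Finset.range j, W i ∈ ball x₀ δ) :
    z + ∑ i ∈ Finset.range m, W i ∈ closure Ω ∧
      ((z ∈ Ω ∨ ∃ i < m, W i ≠ 0) → z + ∑ i ∈ Finset.range m, W i ∈ Ω) := by
  induction m with
  | zero =>
    simp only [Finset.range_zero, Finset.sum_empty, add_zero]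
    exact ⟨hz, fun h => by
      rcases h with h | ⟨i, hi, _⟩
      · exact h
      · exact absurd hi (by omega)⟩
  | succ m ih =>
    have ih' := ih (fun i hi => hW i (by omega)) (fun j hj => hB j (by omega))
    obtain ⟨t, ht, vv, hvv, hWm⟩ := hW m (by omega)
    have hsum : z + ∑ i ∈ Finset.range (m + 1), W i
        = (z + ∑ i ∈ Finset.range m, W i) + t • vv := by
      rw [Finset.sum_range_succ, hWm]; abel
    have hB1 : z + ∑ i ∈ Finset.range m, W i ∈ ball x₀ δ := hB m (by omega)
    have hB2 : (z + ∑ i ∈ Finset.range m, W i) + t • vv ∈ ball x₀ δ := by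
      rw [← hsum]; exact hB (m + 1) le_rfl
    have hstep := goodStep hΩ hvv ih'.1 hB1 ht hB2
    rw [hsum]
    refine ⟨hstep.1, ?_⟩
    rintro (h | ⟨i, hi, hWi⟩)
    · exact hstep.2 (Or.inl (ih'.2 (Or.inl h)))
    · rcases Nat.lt_succ_iff_lt_or_eq.1 hi with hi' | rfl
      · exact hstep.2 (Or.inl (ih'.2 (Or.inr ⟨i, hi', hWi⟩)))
      · refine hstep.2 (Or.inr ?_)
        rcases ht.lt_or_eq with h' | h'
        · exact h'
        · exfalso; apply hWi; rw [hWm, ← h', zero_smul]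

/-- Moving up from a point of `closure Ω` by a positive multiple of a convex combination of
good directions lands in `Ω`. -/
private lemma keyLemma {Ω : Set (EuclideanSpace ℝ (Fin d))} (hΩ : IsOpen Ω)
    {x₀ : EuclideanSpace ℝ (Fin d)} {δ : ℝ} {n : ℕ} {v : Fin n → EuclideanSpace ℝ (Fin d)}
    (hv : ∀ i, IsGoodDirection Ω x₀ δ (v i)) {lam : Fin n → ℝ}
    (hlam : ∀ i, lam i ∈ Set.Icc (0 : ℝ) 1) (hsum : ∑ i, lam i = 1)
    {x : EuclideanSpace ℝ (Fin d)} (hx : x ∈ closure Ω) (hxB : x ∈ ball x₀ δ) {t : ℝ}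
    (ht : 0 < t) (hB : x + t • (∑ i, lam i • v i) ∈ ball x₀ δ) :
    x + t • (∑ i, lam i • v i) ∈ Ω := by
  set u : EuclideanSpace ℝ (Fin d) := ∑ i, lam i • v i with hu
  set L : ℕ → ℝ := fun i => if h : i < n then lam ⟨i, h⟩ else 0 with hL
  set V : ℕ → EuclideanSpace ℝ (Fin d) := fun i => if h : i < n then v ⟨i, h⟩ else 0 with hV
  have huLV : u = ∑ i ∈ Finset.range n, L i • V i := by
    rw [hu, ← Fin.sum_univ_eq_sum_range (fun i => L i • V i) n]
    refine Finset.sum_congr rfl fun i _ => ?_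
    simp [hL, hV, i.is_lt]
  have hL0 : ∀ i, 0 ≤ L i := by
    intro i; rw [hL]; dsimp only
    split
    · exact (hlam _).1
    · exact le_rfl
  have hV1 : ∀ i, ‖V i‖ ≤ 1 := by
    intro i; rw [hV]; dsimp only
    split
    · exact le_of_eq (hv _).1
    · simp
  have hLsum : ∀ j, ∑ i ∈ Finset.range j, L i ≤ 1 := by
    intro j
    have h1 : ∑ i ∈ Finset.range n, L i = 1 := by
      rw [← hsum, ← Fin.sum_univ_eq_sum_range (fun i => L i) n]
      refine Finset.sum_congr rfl fun i _ => ?_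
      simp [hL, i.is_lt]
    rcases le_or_gt j n with hj | hj
    · rw [← h1]
      exact Finset.sum_le_sum_of_subset_of_nonneg (Finset.range_subset_range.2 hj)
        (fun i _ _ => hL0 i)
    · rw [← h1]
      refine le_of_eq (Finset.sum_subset (Finset.range_subset_range.2 hj.le) fun i _ hi => ?_).symm
      rw [hL]; simp only [Finset.mem_range, not_lt] at hi
      simp [Nat.not_lt.2 hi]
  -- partial sums have norm ≤ 1
  have hSnorm : ∀ j, ‖∑ i ∈ Finset.range j, L i • V i‖ ≤ 1 := by
    intro j
    calc ‖∑ i ∈ Finset.range j, L i • V i‖ ≤ ∑ i ∈ Finset.range j, ‖L i • V i‖ :=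
          norm_sum_le _ _
      _ ≤ ∑ i ∈ Finset.range j, L i := by
          refine Finset.sum_le_sum fun i _ => ?_
          rw [norm_smul, Real.norm_eq_abs, abs_of_nonneg (hL0 i)]
          calc L i * ‖V i‖ ≤ L i * 1 := by
                exact mul_le_mul_of_nonneg_left (hV1 i) (hL0 i)
            _ = L i := mul_one _
      _ ≤ 1 := hLsum j
  -- the segment from x to x + t • u, as a compact subset of the ball
  set K : Set (EuclideanSpace ℝ (Fin d)) := (fun s : ℝ => x + s • u) '' Set.Icc 0 t with hK
  have hKcomp : IsCompact K := isCompact_Icc.image (by continuity)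
  have hKB : K ⊆ ball x₀ δ := by
    rintro _ ⟨s, ⟨hs0, hst⟩, rfl⟩
    have hconv := (convex_ball x₀ δ) hxB hB (a := 1 - s / t) (b := s / t)
      (by rw [sub_nonneg]; exact (div_le_one ht).2 hst) (div_nonneg hs0 ht.le)
      (by ring)
    have : (1 - s / t) • x + (s / t) • (x + t • u) = x + s • u := by
      have hst' : (s / t) * t = s := div_mul_cancel₀ s ht.ne'
      rw [smul_add, sub_smul, one_smul, smul_smul, hst']
      abel
    rwa [this] at hconv
  obtain ⟨ε, hε, hthick⟩ := hKcomp.exists_thickening_subset_open isOpen_ball hKB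
  obtain ⟨N, hN⟩ := exists_nat_gt (t / ε)
  have hN0 : 0 < N := by
    have h1 : (0 : ℝ) < N := lt_trans (div_pos ht hε) hN
    exact_mod_cast h1
  set c : ℝ := t / N with hc
  have hc0 : 0 < c := div_pos ht (by exact_mod_cast hN0)
  have hcε : c < ε := by
    rw [hc, div_lt_iff₀ (by exact_mod_cast hN0)]
    calc t = (t / ε) * ε := by field_simp
      _ < N * ε := by exact mul_lt_mul_of_pos_right hN hε
      _ = ε * N := mul_comm _ _
  set W : ℕ → EuclideanSpace ℝ (Fin d) := fun i => (c * L i) • V i with hW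
  have hWgood : ∀ i < n, ∃ s : ℝ, 0 ≤ s ∧ ∃ vv, IsGoodDirection Ω x₀ δ vv ∧ W i = s • vv := by
    intro i hi
    refine ⟨c * L i, mul_nonneg hc0.le (hL0 i), v ⟨i, hi⟩, hv _, ?_⟩
    rw [hW]; dsimp only; rw [hV]; simp [hi]
  have hWsum : ∀ j, ∑ i ∈ Finset.range j, W i = c • ∑ i ∈ Finset.range j, L i • V i := by
    intro j
    rw [Finset.smul_sum]
    exact Finset.sum_congr rfl fun i _ => by rw [hW]; dsimp only; rw [smul_smul]
  -- each intermediate point of a round starting on the segment lies in the ball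
  have hround : ∀ k : ℕ, k ≤ N → ∀ j ≤ n,
      (x + ((k : ℝ) * c) • u) + ∑ i ∈ Finset.range j, W i ∈ ball x₀ δ := by
    intro k hk j hj
    apply hthick
    rw [mem_thickening_iff]
    refine ⟨x + ((k : ℝ) * c) • u, ⟨(k : ℝ) * c, ⟨by positivity, ?_⟩, rfl⟩, ?_⟩
    · rw [hc]
      calc (k : ℝ) * (t / N) ≤ N * (t / N) := by
            apply mul_le_mul_of_nonneg_right _ (by positivity)
            exact_mod_cast hk
        _ = t := by field_simp
    · rw [dist_eq_norm, add_sub_cancel_left, hWsum, norm_smul, Real.norm_eq_abs,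
        abs_of_nonneg hc0.le]
      calc c * ‖∑ i ∈ Finset.range j, L i • V i‖ ≤ c * 1 :=
            mul_le_mul_of_nonneg_left (hSnorm j) hc0.le
        _ = c := mul_one _
        _ < ε := hcε
  have hlampos : ∃ i : Fin n, 0 < lam i := by
    by_contra h
    push_neg at h
    have : ∑ i, lam i = 0 := Finset.sum_eq_zero fun i _ => le_antisymm (h i) (hlam i).1
    rw [hsum] at this; norm_num at this
  have hWne : ∃ i < n, W i ≠ 0 := by
    obtain ⟨i, hi⟩ := hlampos
    refine ⟨i, i.is_lt, ?_⟩
    rw [hW]; dsimp only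
    have hLi : L (i : ℕ) = lam i := by rw [hL]; simp [i.is_lt]
    have hVi : V (i : ℕ) = v i := by rw [hV]; simp [i.is_lt]
    rw [hLi, hVi]
    have hvne : v i ≠ 0 := by
      intro h0
      have := (hv i).1
      rw [h0] at this; simp at this
    exact smul_ne_zero (ne_of_gt (mul_pos hc0 hi)) hvne
  -- induction over rounds
  have hmain : ∀ k : ℕ, k ≤ N → x + ((k : ℝ) * c) • u ∈ closure Ω ∧
      (0 < k → x + ((k : ℝ) * c) • u ∈ Ω) := by
    intro k
    induction k with
    | zero =>
      intro _
      refine ⟨by simpa using hx, fun h => absurd h (lt_irrefl 0)⟩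
    | succ k ih =>
      intro hk
      have ih' := ih (by omega)
      have hr := roundN hΩ n W hWgood ih'.1 (hround k (by omega))
      have hstep : (x + ((k : ℝ) * c) • u) + ∑ i ∈ Finset.range n, W i
          = x + (((k : ℝ) + 1) * c) • u := by
        rw [hWsum n, ← huLV]
        rw [show ((k : ℝ) + 1) * c = (k : ℝ) * c + c by ring, add_smul]
        abel
      have hΩmem : x + (((k : ℝ) + 1) * c) • u ∈ Ω := by
        rw [← hstep]
        exact hr.2 (Or.inr hWne)
      push_cast
      exact ⟨subset_closure hΩmem, fun _ => hΩmem⟩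
  have hfin := (hmain N le_rfl).2 hN0
  have : (N : ℝ) * c = t := by rw [hc]; field_simp
  rwa [this] at hfin

private lemma buildGood {Ω : Set (EuclideanSpace ℝ (Fin d))} (hΩ : IsOpen Ω)
    {x₀ w : EuclideanSpace ℝ (Fin d)} {δ : ℝ} (hδ : 0 < δ) (hw : ‖w‖ = 1)
    (key : ∀ x ∈ closure Ω, x ∈ ball x₀ δ → ∀ t : ℝ, 0 < t → x + t • w ∈ ball x₀ δ →
      x + t • w ∈ Ω) :
    IsGoodDirection Ω x₀ δ w := by
  set r : EuclideanSpace ℝ (Fin d) → ℝ := fun p => Real.sqrt (δ ^ 2 - ‖p - x₀‖ ^ 2) with hrdef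
  have hr0 : ∀ p, 0 ≤ r p := fun p => Real.sqrt_nonneg _
  have hrc : Continuous r := by
    apply Real.continuous_sqrt.comp
    continuity
  have hball : ∀ (p : EuclideanSpace ℝ (Fin d)) (s : ℝ), ⟪p - x₀, w⟫ = 0 →
      (p + s • w ∈ ball x₀ δ ↔ |s| < r p) := by
    intro p s hp
    have h : p + s • w - x₀ = (p - x₀) + s • w := by abel
    have hn : ‖p + s • w - x₀‖ ^ 2 = ‖p - x₀‖ ^ 2 + s ^ 2 := by
      rw [h, norm_add_sq_real, real_inner_smul_right, hp, norm_smul, hw]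
      simp [mul_pow, sq_abs]
    rw [mem_ball, dist_eq_norm, hrdef]
    rw [Real.lt_sqrt (abs_nonneg s), sq_abs,
      ← pow_lt_pow_iff_left₀ (norm_nonneg _) hδ.le (two_ne_zero), hn]
    constructor <;> intro h <;> linarith
  -- moving up along `w` within a chord
  have key' : ∀ (p : EuclideanSpace ℝ (Fin d)) (s s' : ℝ), ⟪p - x₀, w⟫ = 0 →
      |s| < r p → |s'| < r p → s < s' → p + s • w ∈ closure Ω → p + s' • w ∈ Ω := by
    intro p s s' hp hs hs' hss hcl
    have hdecomp : p + s' • w = (p + s • w) + (s' - s) • w := by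
      rw [sub_smul]; abel
    rw [hdecomp]
    exact key _ hcl ((hball p s hp).2 hs) _ (by linarith) (by
      rw [← hdecomp]; exact (hball p s' hp).2 hs')
  set A : EuclideanSpace ℝ (Fin d) → Set ℝ :=
    fun p => insert (r p) {s : ℝ | |s| < r p ∧ p + s • w ∈ closure Ω} with hAdef
  set g : EuclideanSpace ℝ (Fin d) → ℝ := fun p => sInf (A p) with hgdef
  have hAne : ∀ p, (A p).Nonempty := fun p => ⟨r p, mem_insert _ _⟩
  have hAbd : ∀ p s, s ∈ A p → -r p ≤ s := by
    intro p s hs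
    rcases hs with rfl | ⟨habs, _⟩
    · linarith [hr0 p]
    · exact (abs_lt.1 habs).1.le
  have hAbdd : ∀ p, BddBelow (A p) := fun p => ⟨-r p, fun s hs => hAbd p s hs⟩
  have hgle : ∀ p, g p ≤ r p := fun p => csInf_le (hAbdd p) (mem_insert _ _)
  have hgge : ∀ p, -r p ≤ g p := fun p => le_csInf (hAne p) (hAbd p)
  -- basic characterizations
  have hdown : ∀ p s, |s| < r p → p + s • w ∈ closure Ω → g p ≤ s := by
    intro p s habs hcl
    exact csInf_le (hAbdd p) (Or.inr ⟨habs, hcl⟩)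
  have hup : ∀ p s, ⟪p - x₀, w⟫ = 0 → g p < s → |s| < r p → p + s • w ∈ Ω := by
    intro p s hp hgs habs
    obtain ⟨s', hs'A, hs's⟩ := exists_lt_of_csInf_lt (hAne p) hgs
    rcases hs'A with rfl | ⟨habs', hcl'⟩
    · exact absurd ((abs_lt.1 habs).2) (by linarith)
    · exact key' p s' s hp habs' habs hs's hcl'
  have hΩlt : ∀ p s, |s| < r p → p + s • w ∈ Ω → g p < s := by
    intro p s habs hmem
    obtain ⟨ρ, hρ, hρsub⟩ := Metric.isOpen_iff.1 hΩ _ hmem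
    obtain ⟨s', hs'1, hs'2⟩ := exists_between (show max (-r p) (s - ρ) < s from
      max_lt (abs_lt.1 habs).1 (by linarith))
    have habs' : |s'| < r p := abs_lt.2 ⟨lt_of_le_of_lt (le_max_left _ _) hs'1, by
      linarith [(abs_lt.1 habs).2]⟩
    have hmem' : p + s' • w ∈ Ω := by
      apply hρsub
      rw [mem_ball, dist_eq_norm, show p + s' • w - (p + s • w) = (s' - s) • w by
        rw [sub_smul]; abel, norm_smul, hw, mul_one, Real.norm_eq_abs, abs_sub_lt_iff]
      constructor
      · linarith [lt_of_le_of_lt (le_max_right (-r p) (s - ρ)) hs'1]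
      · linarith [lt_of_le_of_lt (le_max_right (-r p) (s - ρ)) hs'1]
    exact lt_of_le_of_lt (hdown p s' habs' (subset_closure hmem')) hs'2
  have hfrq : ∀ p s, ⟪p - x₀, w⟫ = 0 → |s| < r p → p + s • w ∈ frontier Ω → g p = s := by
    intro p s hp habs hmem
    refine le_antisymm (hdown p s habs (frontier_subset_closure hmem)) ?_
    apply le_csInf (hAne p)
    intro s' hs'
    rcases hs' with rfl | ⟨habs', hcl'⟩
    · exact (abs_lt.1 habs).2.le
    · by_contra hc
      push_neg at hc
      have := key' p s' s hp habs' habs hc hcl'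
      rw [hΩ.frontier_eq] at hmem
      exact hmem.2 this
  have hext : ∀ p s, ⟪p - x₀, w⟫ = 0 → |s| < r p → p + s • w ∉ closure Ω → s < g p := by
    intro p s hp habs hmem
    obtain ⟨ρ, hρ, hρsub⟩ := Metric.isOpen_iff.1 isClosed_closure.isOpen_compl _ hmem
    set s₁ : ℝ := min (s + ρ / 2) ((s + r p) / 2) with hs₁def
    have hss₁ : s < s₁ := lt_min (by linarith) (by linarith [(abs_lt.1 habs).2])
    have hfin : s₁ ≤ g p := by
      apply le_csInf (hAne p)
      intro s' hs'
      rcases hs' with rfl | ⟨habs', hcl'⟩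
      · calc s₁ ≤ (s + r p) / 2 := min_le_right _ _
          _ ≤ r p := by linarith [(abs_lt.1 habs).2]
      · by_contra hc
        push_neg at hc
        rcases lt_trichotomy s' s with h | rfl | h
        · exact (absurd (subset_closure (key' p s' s hp habs' habs h hcl')) hmem)
        · exact hmem hcl'
        · refine hρsub ?_ hcl'
          rw [mem_ball, dist_eq_norm, show p + s' • w - (p + s • w) = (s' - s) • w by
            rw [sub_smul]; abel, norm_smul, hw, mul_one, Real.norm_eq_abs, abs_sub_lt_iff]
          have : s' < s + ρ / 2 := lt_of_lt_of_le hc (min_le_left _ _)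
          constructor <;> linarith
    linarith
  -- decomposition of points of the ball
  have hdec : ∀ x : EuclideanSpace ℝ (Fin d),
      ⟪(x - ⟪x - x₀, w⟫ • w) - x₀, w⟫ = 0 ∧ (x - ⟪x - x₀, w⟫ • w) + ⟪x - x₀, w⟫ • w = x := by
    intro x
    constructor
    · have h : (x - ⟪x - x₀, w⟫ • w) - x₀ = (x - x₀) - ⟪x - x₀, w⟫ • w := by abel
      rw [h, inner_sub_left, real_inner_smul_left, real_inner_self_eq_norm_sq, hw]
      ring
    · abel
  refine ⟨hw, g, ?_, ?_, ?_⟩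
  · -- continuity
    rw [Metric.continuousOn_iff]
    intro p hp ε hε
    simp only [mem_setOf_eq] at hp
    -- upper bound
    have hupper : ∃ δ₁ > 0, ∀ q : EuclideanSpace ℝ (Fin d), ⟪q - x₀, w⟫ = 0 →
        dist q p < δ₁ → g q < g p + ε := by
      rcases lt_or_ge (r p) (g p + ε) with hcase | hcase
      · obtain ⟨δ₁, hδ₁, hδ₁'⟩ := Metric.continuous_iff.1 hrc p (g p + ε - r p) (by linarith)
        refine ⟨δ₁, hδ₁, fun q _ hq => ?_⟩
        have := hδ₁' q hq
        rw [Real.dist_eq, abs_sub_lt_iff] at this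
        linarith [hgle q]
      · obtain ⟨s, hsdef⟩ : ∃ s : ℝ, s = g p + ε / 2 := ⟨_, rfl⟩
        have hs1 : g p < s := by linarith
        have hs2 : s < r p := by linarith
        have habs : |s| < r p := abs_lt.2 ⟨by linarith [hgge p], hs2⟩
        have hmem : p + s • w ∈ Ω := hup p s hp hs1 habs
        obtain ⟨ρ, hρ, hρsub⟩ := Metric.isOpen_iff.1 hΩ _ hmem
        obtain ⟨δ₂, hδ₂, hδ₂'⟩ := Metric.continuous_iff.1 hrc p (r p - |s|) (by linarith)
        refine ⟨min ρ δ₂, lt_min hρ hδ₂, fun q _ hq => ?_⟩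
        have hq1 : dist q p < ρ := lt_of_lt_of_le hq (min_le_left _ _)
        have hq2 : dist q p < δ₂ := lt_of_lt_of_le hq (min_le_right _ _)
        have hrq : |s| < r q := by
          have := hδ₂' q hq2
          rw [Real.dist_eq, abs_sub_lt_iff] at this
          linarith
        have hmem' : q + s • w ∈ Ω := by
          apply hρsub
          rw [mem_ball, dist_eq_norm, show q + s • w - (p + s • w) = q - p by abel]
          rw [dist_eq_norm] at hq1
          exact hq1
        have := hdown q s hrq (subset_closure hmem')
        linarith
    -- lower bound
    have hlower : ∃ δ₁ > 0, ∀ q : EuclideanSpace ℝ (Fin d), ⟪q - x₀, w⟫ = 0 →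
        dist q p < δ₁ → g p - ε < g q := by
      rcases lt_or_ge (g p - ε) (-r p) with hcase | hcase
      · obtain ⟨δ₁, hδ₁, hδ₁'⟩ := Metric.continuous_iff.1 hrc p (-r p - (g p - ε)) (by linarith)
        refine ⟨δ₁, hδ₁, fun q _ hq => ?_⟩
        have := hδ₁' q hq
        rw [Real.dist_eq, abs_sub_lt_iff] at this
        linarith [hgge q]
      · obtain ⟨s, hsdef⟩ : ∃ s : ℝ, s = g p - ε / 2 := ⟨_, rfl⟩
        have hs1 : s < g p := by linarith
        have habs : |s| < r p := abs_lt.2 ⟨by linarith, by linarith [hgle p]⟩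
        have hmem : p + s • w ∉ closure Ω := by
          intro hcl
          linarith [hdown p s habs hcl]
        obtain ⟨ρ, hρ, hρsub⟩ := Metric.isOpen_iff.1 isClosed_closure.isOpen_compl _ hmem
        obtain ⟨δ₂, hδ₂, hδ₂'⟩ := Metric.continuous_iff.1 hrc p (r p - |s|) (by linarith [abs_lt.1 habs])
        refine ⟨min ρ δ₂, lt_min hρ hδ₂, fun q hq0 hq => ?_⟩
        have hq1 : dist q p < ρ := lt_of_lt_of_le hq (min_le_left _ _)
        have hq2 : dist q p < δ₂ := lt_of_lt_of_le hq (min_le_right _ _)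
        have hrq : |s| < r q := by
          have := hδ₂' q hq2
          rw [Real.dist_eq, abs_sub_lt_iff] at this
          linarith
        have hmem' : q + s • w ∉ closure Ω := by
          apply hρsub
          rw [mem_ball, dist_eq_norm, show q + s • w - (p + s • w) = q - p by abel]
          rw [dist_eq_norm] at hq1
          exact hq1
        have hsg : s ≤ g q := by
          apply le_csInf (hAne q)
          intro s' hs'
          rcases hs' with rfl | ⟨habs', hcl'⟩
          · exact le_trans (le_abs_self s) hrq.le
          · by_contra hc
            push_neg at hc
            exact hmem' (subset_closure (key' q s' s hq0 habs' hrq hc hcl'))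
        linarith
    obtain ⟨δ₁, hδ₁, h₁⟩ := hupper
    obtain ⟨δ₂, hδ₂, h₂⟩ := hlower
    refine ⟨min δ₁ δ₂, lt_min hδ₁ hδ₂, fun q hq hdist => ?_⟩
    simp only [mem_setOf_eq] at hq
    rw [Real.dist_eq, abs_sub_lt_iff]
    constructor
    · linarith [h₁ q hq (lt_of_lt_of_le hdist (min_le_left _ _))]
    · linarith [h₂ q hq (lt_of_lt_of_le hdist (min_le_right _ _))]
  · -- Ω ∩ ball
    ext x
    simp only [mem_inter_iff, mem_setOf_eq]
    constructor
    · rintro ⟨hxΩ, hxb⟩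
      refine ⟨hxb, ?_⟩
      obtain ⟨hp, hx⟩ := hdec x
      apply hΩlt _ _ ((hball _ _ hp).1 (by rwa [hx])) (by rwa [hx])
    · rintro ⟨hxb, hlt⟩
      obtain ⟨hp, hx⟩ := hdec x
      refine ⟨?_, hxb⟩
      have := hup _ _ hp hlt ((hball _ _ hp).1 (by rwa [hx]))
      rwa [hx] at this
  · -- frontier ∩ ball
    ext x
    simp only [mem_inter_iff, mem_setOf_eq]
    constructor
    · rintro ⟨hxf, hxb⟩
      refine ⟨hxb, ?_⟩
      obtain ⟨hp, hx⟩ := hdec x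
      exact hfrq _ _ hp ((hball _ _ hp).1 (by rwa [hx])) (by rwa [hx])
    · rintro ⟨hxb, heq⟩
      obtain ⟨hp, hx⟩ := hdec x
      have habs : |⟪x - x₀, w⟫| < r (x - ⟪x - x₀, w⟫ • w) := (hball _ _ hp).1 (by rwa [hx])
      refine ⟨?_, hxb⟩
      by_cases hcl : x ∈ closure Ω
      · rw [closure_eq_union hΩ] at hcl
        rcases hcl with hcl | hcl
        · exact absurd (hΩlt _ _ habs (by rwa [hx])) (by rw [heq]; exact lt_irrefl _)
        · exact hcl
      · exact absurd (hext _ _ hp habs (by rwa [hx])) (by rw [heq]; exact lt_irrefl _)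

/-- **Finite convex combinations of good directions** (Corollary A.4 / `cr:GDsAreGeoConvex`):
any convex combination of finitely many good directions for `Ω` at `x₀` at scale `δ` is nonzero,
and its normalisation is again a good direction for `Ω` at `x₀` at scale `δ`. -/
theorem goodDirections_finite_convex {d : ℕ} (Ω : Set (EuclideanSpace ℝ (Fin d)))
    (hΩ : IsOpen Ω) (δ : ℝ) (hδ : 0 < δ) (x₀ : EuclideanSpace ℝ (Fin d))
    (hne : (frontier Ω ∩ ball x₀ δ).Nonempty)
    (n : ℕ) (v : Fin n → EuclideanSpace ℝ (Fin d))
    (hv : ∀ i, IsGoodDirection Ω x₀ δ (v i))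
    (lam : Fin n → ℝ) (hlam : ∀ i, lam i ∈ Set.Icc (0 : ℝ) 1)
    (hsum : ∑ i, lam i = 1) :
    (∑ i, lam i • v i) ≠ 0 ∧
    IsGoodDirection Ω x₀ δ (‖∑ i, lam i • v i‖⁻¹ • ∑ i, lam i • v i) := by
  have hune : (∑ i, lam i • v i) ≠ 0 := by
    intro h0
    obtain ⟨y, hyf, hyB⟩ := hne
    have hyc : y ∈ closure Ω := frontier_subset_closure hyf
    have hmem := keyLemma hΩ hv hlam hsum hyc hyB one_pos
      (by rw [h0, smul_zero, add_zero]; exact hyB)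
    rw [h0, smul_zero, add_zero] at hmem
    rw [hΩ.frontier_eq] at hyf
    exact hyf.2 hmem
  refine ⟨hune, ?_⟩
  have hnorm : ‖∑ i, lam i • v i‖ ≠ 0 := norm_ne_zero_iff.2 hune
  have hw : ‖‖∑ i, lam i • v i‖⁻¹ • ∑ i, lam i • v i‖ = 1 := by
    rw [norm_smul, norm_inv, norm_norm, inv_mul_cancel₀ hnorm]
  apply buildGood hΩ hδ hw
  intro x hx hxB t ht hB
  have hpos : 0 < t * ‖∑ i, lam i • v i‖⁻¹ :=
    mul_pos ht (inv_pos.2 ((norm_nonneg _).lt_of_ne (Ne.symm hnorm)))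
  have hsmul : t • (‖∑ i, lam i • v i‖⁻¹ • ∑ i, lam i • v i)
      = (t * ‖∑ i, lam i • v i‖⁻¹) • ∑ i, lam i • v i := smul_smul _ _ _
  rw [hsmul] at hB ⊢
  exact keyLemma hΩ hv hlam hsum hx hxB hpos hB
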